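/- The function w(x) = (48x(x² − 15) cos x − 144(2x² − 5) sin x) / (π x⁷) (extended continuously at 0) has Fourier transform φ_w(t) = ∫ e^{itx} w(x) dx equal to (1 − t²)³ for |t| ≤ 1 and 0 for |t| > 1. -/

import Mathlib

open Real MeasureTheory
open scoped FourierTransform
open Complex

noncomputable def wandN (X : ℂ) (z : ℂ) : ℂ :=
  (-(Complex.I*X^6))*z^6 + (-6*X^5)*z^5 + (3*Complex.I*X^6 + 30*Complex.I*X^4)*z^4
    + (12*X^5+120*X^3)*z^3 + (-3*Complex.I*X^6 - 36*Complex.I*X^4 - 360*Complex.I*X^2)*z^2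
    + (-6*X^5 - 72*X^3 - 720*X)*z
    + (Complex.I*X^6 + 6*Complex.I*X^4 + 72*Complex.I*X^2 + 720*Complex.I)

noncomputable def wandN' (X : ℂ) (z : ℂ) : ℂ :=
  6*(-(Complex.I*X^6))*z^5 + 5*(-6*X^5)*z^4 + 4*(3*Complex.I*X^6 + 30*Complex.I*X^4)*z^3
    + 3*(12*X^5+120*X^3)*z^2 + 2*(-3*Complex.I*X^6 - 36*Complex.I*X^4 - 360*Complex.I*X^2)*z
    + (-6*X^5 - 72*X^3 - 720*X)

lemma wandD1 (X z : ℂ) :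
    -(Complex.I*X) * wandN X z + wandN' X z = (1 - z^2)^3 * X^7 := by
  simp only [wandN, wandN']
  linear_combination (-720*X - 72*X^3 + 360*X^3*z^2 - 6*X^5 + 36*X^5*z^2 - 30*X^5*z^4
    - X^7 + 3*X^7*z^2 - 3*X^7*z^4 + X^7*z^6) * Complex.I_sq

lemma wandD2 (c s X : ℂ) :
    (c - s*Complex.I) * wandN X 1 - (c + s*Complex.I) * wandN X (-1)
      = 96*X^3*c - 1440*X*c - 576*X^2*s + 1440*s := by
  simp only [wandN]
  linear_combination (-1440*s + 576*X^2*s) * Complex.I_sq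

lemma wandN_hasDeriv (X : ℂ) (z : ℂ) :
    HasDerivAt (wandN X) (wandN' X z) z := by
  have h := (((((((hasDerivAt_pow 6 z).const_mul (-(Complex.I*X^6))).add
      ((hasDerivAt_pow 5 z).const_mul (-6*X^5))).add
      ((hasDerivAt_pow 4 z).const_mul (3*Complex.I*X^6 + 30*Complex.I*X^4))).add
      ((hasDerivAt_pow 3 z).const_mul (12*X^5+120*X^3))).add
      ((hasDerivAt_pow 2 z).const_mul (-3*Complex.I*X^6 - 36*Complex.I*X^4 - 360*Complex.I*X^2))).add
      ((hasDerivAt_id z).const_mul (-6*X^5 - 72*X^3 - 720*X))).add_const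
      (Complex.I*X^6 + 6*Complex.I*X^4 + 72*Complex.I*X^2 + 720*Complex.I)
  refine h.congr_deriv (Eq.symm ?_)
  simp only [wandN']
  push_cast
  ring

lemma wand_key (x : ℝ) (hx : x ≠ 0) :
    (∫ u in (-1:ℝ)..1, Complex.exp (-(Complex.I * x) * u) * ((1:ℂ) - (u:ℂ)^2)^3)
      = (96*(x:ℂ)^3*(Real.cos x : ℂ) - 1440*(x:ℂ)*(Real.cos x : ℂ)
          - 576*(x:ℂ)^2*(Real.sin x : ℂ) + 1440*(Real.sin x : ℂ)) / (x:ℂ)^7 := by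
  set X : ℂ := (x : ℂ) with hXdef
  have hX : X ≠ 0 := Complex.ofReal_ne_zero.2 hx
  have hX7 : X^7 ≠ 0 := pow_ne_zero _ hX
  set F : ℝ → ℂ := fun v => Complex.exp (-(Complex.I * X) * v) * wandN X v / X^7 with hF
  have hexp : ∀ u : ℝ, HasDerivAt (fun v : ℝ => Complex.exp (-(Complex.I*X) * v))
      (-(Complex.I*X) * Complex.exp (-(Complex.I*X) * u)) u := by
    intro u
    have h1 : HasDerivAt (fun z : ℂ => Complex.exp (-(Complex.I*X) * z))
        (-(Complex.I*X) * Complex.exp (-(Complex.I*X) * (u:ℂ))) (u:ℂ) := by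
      simpa [mul_comm] using ((hasDerivAt_id (u:ℂ)).const_mul (-(Complex.I*X))).cexp
    exact h1.comp_ofReal
  have hder : ∀ u ∈ Set.uIcc (-1:ℝ) 1, HasDerivAt F
      (Complex.exp (-(Complex.I * X) * u) * ((1:ℂ) - (u:ℂ)^2)^3) u := by
    intro u _
    have hN : HasDerivAt (fun v : ℝ => wandN X (v:ℂ)) (wandN' X (u:ℂ)) u :=
      (wandN_hasDeriv X (u:ℂ)).comp_ofReal
    have h := ((hexp u).mul hN).div_const (X^7)
    refine h.congr_deriv (Eq.symm ?_)
    rw [eq_div_iff hX7]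
    have hD := wandD1 X (u:ℂ)
    linear_combination (-(Complex.exp (-(Complex.I*X) * (u:ℂ)))) * hD
  have hcont : Continuous fun u : ℝ => Complex.exp (-(Complex.I * X) * u) * ((1:ℂ) - (u:ℂ)^2)^3 := by
    fun_prop
  have hint := intervalIntegral.integral_eq_sub_of_hasDerivAt hder (hcont.intervalIntegrable _ _)
  rw [hint]
  have hc1 : ((1:ℝ):ℂ) = 1 := by norm_num
  have hcm1 : ((-1:ℝ):ℂ) = -1 := by norm_num
  simp only [hF, hc1, hcm1]
  rw [show -(Complex.I*X)*(1:ℂ) = (-X)*Complex.I by ring,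
      show -(Complex.I*X)*(-1:ℂ) = X*Complex.I by ring,
      Complex.exp_mul_I, Complex.exp_mul_I, Complex.cos_neg, Complex.sin_neg,
      ← Complex.ofReal_cos, ← Complex.ofReal_sin]
  rw [div_sub_div_same]
  congr 1
  linear_combination wandD2 ((Real.cos x : ℂ)) ((Real.sin x : ℂ)) X


noncomputable def wandG (t : ℝ) : ℂ := ((max (1 - t^2) 0 : ℝ)^3 : ℂ)

lemma wandG_cont : Continuous wandG := by
  unfold wandG; fun_prop

lemma wandG_zero {t : ℝ} (ht : 1 ≤ |t|) : wandG t = 0 := by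
  unfold wandG
  have h1 : 1 - t^2 ≤ 0 := by nlinarith [abs_nonneg t, _root_.sq_abs t]
  rw [max_eq_right h1]
  norm_num

lemma wandG_eq {t : ℝ} (ht : |t| ≤ 1) : wandG t = (((1 - t^2)^3 : ℝ) : ℂ) := by
  unfold wandG
  have h1 : 0 ≤ 1 - t^2 := by nlinarith [abs_nonneg t, _root_.sq_abs t]
  rw [max_eq_left h1]; push_cast; ring

lemma wandG_int : Integrable wandG := by
  refine wandG_cont.integrable_of_hasCompactSupport ?_
  refine HasCompactSupport.intro (isCompact_Icc (a := (-1:ℝ)) (b := 1)) fun t ht => ?_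
  have : 1 ≤ |t| := by
    simp only [Set.mem_Icc, not_and_or, not_le] at ht
    rcases ht with h | h
    · rw [abs_of_neg (by linarith)]; linarith
    · rw [abs_of_pos (by linarith)]; linarith
  exact wandG_zero this

lemma wandF_eq (w : ℝ → ℝ)
    (hw : ∀ x : ℝ, x ≠ 0 →
      w x = (48 * x * (x ^ 2 - 15) * Real.cos x - 144 * (2 * x ^ 2 - 5) * Real.sin x)
              / (π * x ^ 7))
    (x : ℝ) (hx : x ≠ 0) :
    𝓕 (fun ξ : ℝ => wandG (2*π*ξ)) x = ((w x : ℝ) : ℂ) := by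
  calc 𝓕 (fun ξ : ℝ => wandG (2*π*ξ)) x
      = ∫ ξ:ℝ, Complex.exp (↑(-2*π*ξ*x) * Complex.I) • wandG (2*π*ξ) :=
        Real.fourier_real_eq_integral_exp_smul _ _
    _ = ∫ ξ:ℝ, (fun u : ℝ => Complex.exp (-(Complex.I*x)*u) * wandG u) (2*π*ξ) := by
        congr 1 with ξ
        simp only [smul_eq_mul]
        congr 1
        push_cast
        ring
    _ = |(2*π)⁻¹| • ∫ u : ℝ, Complex.exp (-(Complex.I*x)*u) * wandG u :=
        MeasureTheory.Measure.integral_comp_mul_left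
          (fun u : ℝ => Complex.exp (-(Complex.I*x)*u) * wandG u) (2*π)
    _ = |(2*π)⁻¹| • ∫ u in Set.Ioc (-1:ℝ) 1, Complex.exp (-(Complex.I*x)*u) * wandG u := by
        congr 1
        refine (setIntegral_eq_integral_of_forall_compl_eq_zero fun u hu => ?_).symm
        have h1 : 1 ≤ |u| := by
          simp only [Set.mem_Ioc, not_and_or, not_lt, not_le] at hu
          rcases hu with h | h
          · rw [abs_of_nonpos (by linarith)]; linarith
          · rw [abs_of_pos (by linarith)]; linarith
        rw [wandG_zero h1, mul_zero]
    _ = |(2*π)⁻¹| • ∫ u in (-1:ℝ)..1, Complex.exp (-(Complex.I*x)*u) * wandG u := by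
        rw [intervalIntegral.integral_of_le (by norm_num : (-1:ℝ) ≤ 1)]
    _ = |(2*π)⁻¹| • ∫ u in (-1:ℝ)..1, Complex.exp (-(Complex.I*x)*u) * ((1:ℂ) - (u:ℂ)^2)^3 := by
        congr 1
        refine intervalIntegral.integral_congr fun u hu => ?_
        rw [Set.uIcc_of_le (by norm_num : (-1:ℝ) ≤ 1), Set.mem_Icc] at hu
        have : |u| ≤ 1 := abs_le.2 ⟨hu.1, hu.2⟩
        rw [wandG_eq this]
        push_cast
        ring
    _ = ((w x : ℝ) : ℂ) := by
        rw [wand_key x hx, hw x hx, Complex.real_smul]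
        have h2 : |(2*π)⁻¹| = (2*π)⁻¹ := abs_of_pos (by positivity)
        rw [h2]
        have hX : (x:ℂ) ≠ 0 := Complex.ofReal_ne_zero.2 hx
        have hπ : (π:ℂ) ≠ 0 := Complex.ofReal_ne_zero.2 Real.pi_ne_zero
        push_cast
        field_simp
        ring


lemma wand_integrable (w : ℝ → ℝ)
    (hw : ∀ x : ℝ, x ≠ 0 →
      w x = (48 * x * (x ^ 2 - 15) * Real.cos x - 144 * (2 * x ^ 2 - 5) * Real.sin x)
              / (π * x ^ 7))
    (hcont : Continuous w) : Integrable w := by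
  obtain ⟨M, hM⟩ := (isCompact_Icc (a := (-1:ℝ)) (b := 1)).exists_bound_of_continuousOn
    hcont.continuousOn
  set K : ℝ := 2 * max M 3552 with hK
  have hM0 : 0 ≤ M := le_trans (norm_nonneg _) (hM 0 (by norm_num))
  have hmax : (3552:ℝ) ≤ max M 3552 := le_max_right _ _
  have hK0 : (0:ℝ) < K := by nlinarith
  refine (integrable_inv_one_add_sq.const_mul K).mono' hcont.aestronglyMeasurable
    (ae_of_all _ fun x => ?_)
  have hden : (0:ℝ) < 1 + x^2 := by positivity
  rcases le_or_gt |x| 1 with h | h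
  · have hb := hM x (Set.mem_Icc.2 (abs_le.1 h))
    have h2 : 1 + x^2 ≤ 2 := by nlinarith [_root_.sq_abs x, abs_nonneg x]
    calc ‖w x‖ ≤ M := hb
      _ ≤ K * (1+x^2)⁻¹ := by
          rw [← div_eq_mul_inv, le_div_iff₀ hden]
          have hm : M ≤ max M 3552 := le_max_left _ _
          nlinarith
  · have hx : x ≠ 0 := by
      intro h0
      rw [h0] at h
      norm_num at h
    have hA1 : 1 ≤ |x| := h.le
    have hA0 : (0:ℝ) < |x| := by positivity
    rw [Real.norm_eq_abs, hw x hx, abs_div]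
    have hd : |π * x^7| = π * |x|^7 := by
      rw [abs_mul, _root_.abs_pow, abs_of_pos Real.pi_pos]
    rw [hd, ← div_eq_mul_inv, div_le_div_iff₀ (by positivity) hden]
    have hnum : |48 * x * (x ^ 2 - 15) * Real.cos x - 144 * (2 * x ^ 2 - 5) * Real.sin x|
        ≤ 1776 * |x|^3 := by
      have h15 : |x^2 - 15| ≤ x^2 + 15 :=
        abs_le.2 ⟨by nlinarith [sq_nonneg x], by nlinarith [sq_nonneg x]⟩
      have h5 : |2*x^2 - 5| ≤ 2*x^2 + 5 :=
        abs_le.2 ⟨by nlinarith [sq_nonneg x], by nlinarith [sq_nonneg x]⟩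
      have hc := abs_cos_le_one x
      have hs := abs_sin_le_one x
      have e1 : |48 * x * (x ^ 2 - 15) * Real.cos x| ≤ 48 * |x| * (x^2 + 15) := by
        rw [abs_mul, abs_mul, abs_mul, show |(48:ℝ)| = 48 by norm_num]
        have step := mul_le_mul (mul_le_mul_of_nonneg_left h15
          (by positivity : (0:ℝ) ≤ 48 * |x|)) hc (abs_nonneg _) (by positivity)
        simpa using step
      have e2 : |144 * (2 * x ^ 2 - 5) * Real.sin x| ≤ 144 * (2*x^2 + 5) := by
        rw [abs_mul, abs_mul, show |(144:ℝ)| = 144 by norm_num]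
        have step := mul_le_mul (mul_le_mul_of_nonneg_left h5
          (by positivity : (0:ℝ) ≤ (144:ℝ))) hs (abs_nonneg _) (by positivity)
        simpa using step
      have tri := abs_sub (48 * x * (x ^ 2 - 15) * Real.cos x)
        (144 * (2 * x ^ 2 - 5) * Real.sin x)
      have hx2 : x^2 = |x|^2 := (_root_.sq_abs x).symm
      have p2 : |x| ≤ |x|^3 := by nlinarith
      have p3 : |x|^2 ≤ |x|^3 := by nlinarith
      have p4 : (1:ℝ) ≤ |x|^3 := by nlinarith
      nlinarith
    have hx2 : x^2 = |x|^2 := (_root_.sq_abs x).symm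
    have p5 : |x|^5 ≤ |x|^7 := pow_le_pow_right₀ hA1 (by norm_num)
    have hπ : (3:ℝ) ≤ π := by linarith [Real.pi_gt_three]
    have habs0 : 0 ≤ |48 * x * (x ^ 2 - 15) * Real.cos x - 144 * (2 * x ^ 2 - 5) * Real.sin x| :=
      abs_nonneg _
    have hKb : (7104:ℝ) ≤ K := by nlinarith
    calc |48 * x * (x ^ 2 - 15) * Real.cos x - 144 * (2 * x ^ 2 - 5) * Real.sin x| * (1 + x^2)
        ≤ (1776 * |x|^3) * (2 * |x|^2) := by
          have h2A : 1 + x^2 ≤ 2 * |x|^2 := by nlinarith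
          exact mul_le_mul hnum h2A (by positivity) (by positivity)
      _ = 3552 * |x|^5 := by ring
      _ ≤ 3552 * |x|^7 := by nlinarith
      _ ≤ K * (π * |x|^7) := by
          have hKπ : (3552:ℝ) ≤ K * π := by nlinarith
          have hfin := mul_le_mul_of_nonneg_right hKπ (pow_nonneg (abs_nonneg x) 7)
          nlinarith [hfin]

/-- The Wand kernel `w(x) = (48x(x²−15) cos x − 144(2x²−5) sin x)/(π x⁷)`
(extended continuously at 0) has Fourier transform `(1−t²)³` on `[-1,1]` and `0` outside. -/
theorem wand_kernel_fourier_transform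
    (w : ℝ → ℝ)
    (hw : ∀ x : ℝ, x ≠ 0 →
      w x = (48 * x * (x ^ 2 - 15) * Real.cos x - 144 * (2 * x ^ 2 - 5) * Real.sin x)
              / (π * x ^ 7))
    (hw0 : ContinuousAt w 0) :
    ∀ t : ℝ, (∫ x : ℝ, Complex.exp (Complex.I * t * x) * (w x : ℂ)) =
      if |t| ≤ 1 then ((1 - t ^ 2 : ℝ) ^ 3 : ℂ) else 0 := by
  intro t
  set f : ℝ → ℂ := fun ξ => wandG (2*π*ξ) with hf
  have hf_cont : Continuous f := wandG_cont.comp (by fun_prop)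
  have h2π : (2*π : ℝ) ≠ 0 := by positivity
  have hf_int : Integrable f := wandG_int.comp_mul_left' h2π
  have hFx : ∀ x : ℝ, x ≠ 0 → 𝓕 f x = ((w x : ℝ) : ℂ) := wandF_eq w hw
  have hFcont : Continuous (𝓕 f) :=
    VectorFourier.fourierIntegral_continuous Real.continuous_fourierChar
      (by exact continuous_inner) hf_int
  have hw0' : ContinuousAt (fun x : ℝ => ((w x : ℝ) : ℂ)) 0 :=
    Complex.continuous_ofReal.continuousAt.comp hw0
  have hF0 : 𝓕 f 0 = ((w 0 : ℝ) : ℂ) := by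
    have h1 : Filter.Tendsto (𝓕 f) (nhdsWithin (0:ℝ) {(0:ℝ)}ᶜ) (nhds (𝓕 f 0)) :=
      hFcont.continuousAt.continuousWithinAt
    have h2 : Filter.Tendsto (fun x : ℝ => ((w x : ℝ) : ℂ)) (nhdsWithin (0:ℝ) {(0:ℝ)}ᶜ)
        (nhds ((w 0 : ℝ) : ℂ)) := hw0'.continuousWithinAt
    have h3 : 𝓕 f =ᶠ[nhdsWithin (0:ℝ) {(0:ℝ)}ᶜ] fun x : ℝ => ((w x : ℝ) : ℂ) :=
      eventually_mem_nhdsWithin.mono fun x hx => hFx x hx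
    exact tendsto_nhds_unique (h1.congr' h3) h2
  have hFeq : 𝓕 f = fun x : ℝ => ((w x : ℝ) : ℂ) := by
    funext x
    by_cases hx : x = 0
    · rw [hx]; exact hF0
    · exact hFx x hx
  have hw_cont : Continuous w := by
    have hc : Continuous fun x : ℝ => ((w x : ℝ) : ℂ) := hFeq ▸ hFcont
    have := Complex.continuous_re.comp hc
    simpa [Function.comp_def] using this
  have hw_int : Integrable w := wand_integrable w hw hw_cont
  have hFf_int : Integrable (𝓕 f) := by
    rw [hFeq]; exact hw_int.ofReal
  have hinv := hf_int.fourierInv_fourier_eq hFf_int (hf_cont.continuousAt (x := t/(2*π)))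
  calc (∫ x : ℝ, Complex.exp (Complex.I * t * x) * (w x : ℂ))
      = 𝓕⁻ (𝓕 f) (t/(2*π)) := by
        rw [hFeq, Real.fourierInv_eq']
        congr 1
        funext v
        rw [smul_eq_mul]
        congr 1
        have hin : (inner ℝ v (t/(2*π)) : ℝ) = v * (t/(2*π)) := by
          simp [RCLike.inner_apply, mul_comm]
        rw [hin]
        have hv : 2*π*(v*(t/(2*π))) = v * t := by field_simp
        rw [hv]
        push_cast
        ring
    _ = f (t/(2*π)) := hinv
    _ = wandG t := by
        simp only [hf]
        congr 1
        field_simp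
    _ = if |t| ≤ 1 then ((1 - t ^ 2 : ℝ) ^ 3 : ℂ) else 0 := by
        by_cases ht : |t| ≤ 1
        · rw [if_pos ht, wandG_eq ht]; push_cast; ring
        · rw [if_neg ht, wandG_zero (le_of_lt (lt_of_not_ge ht))]
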